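/- Let λ, μ, ν > 0 and let ∇ be the unique ℝ-bilinear map V × V → V satisfying the Koszul formula 2·h(∇_A B, C) = h(C, [A,B]) + h(B, [C,A]) − h(A, [B,C]) for all A, B, C ∈ V. Then ∇_X X = 0, ∇_X Y = ((λ²+μ²+ν²)/(λμν))·Z, ∇_X Z = −((λ²+μ²+ν²)/(λμν))·Y, ∇_Y X = ((λ²+μ²−ν²)/(λμν))·Z, ∇_Y Y = 0, ∇_Y Z = ((λ²+μ²−ν²)/(λμν))·X, ∇_Z X = ((−λ²+μ²−ν²)/(λμν))·Y, ∇_Z Y = ((−λ²+μ²−ν²)/(λμν))·X, and ∇_Z Z = 0. -/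
import Mathlib


/-- The Lorentzian scalar product on `ℝ³` with `h(X,X) = −1`, `h(Y,Y) = h(Z,Z) = 1`. -/
def hLor (v w : Fin 3 → ℝ) : ℝ := -(v 0 * w 0) + v 1 * w 1 + v 2 * w 2

set_option maxHeartbeats 1000000 in
theorem levi_civita_lorentzian_berger_sphere
    (l m n : ℝ) (hl : 0 < l) (hm : 0 < m) (hn : 0 < n)
    (X Y Z : Fin 3 → ℝ) (hX : X = ![1, 0, 0]) (hY : Y = ![0, 1, 0]) (hZ : Z = ![0, 0, 1])
    (bracket : (Fin 3 → ℝ) →ₗ[ℝ] (Fin 3 → ℝ) →ₗ[ℝ] (Fin 3 → ℝ))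
    (halt : ∀ v, bracket v v = 0)
    (hXY : bracket X Y = (2 * n / (l * m)) • Z)
    (hZX : bracket Z X = (2 * m / (l * n)) • Y)
    (hYZ : bracket Y Z = (2 * l / (m * n)) • X)
    (nabla : (Fin 3 → ℝ) →ₗ[ℝ] (Fin 3 → ℝ) →ₗ[ℝ] (Fin 3 → ℝ))
    (hKoszul : ∀ A B C, 2 * hLor (nabla A B) C =
      hLor C (bracket A B) + hLor B (bracket C A) - hLor A (bracket B C)) :
    nabla X X = 0 ∧
    nabla X Y = ((l ^ 2 + m ^ 2 + n ^ 2) / (l * m * n)) • Z ∧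
    nabla X Z = -(((l ^ 2 + m ^ 2 + n ^ 2) / (l * m * n)) • Y) ∧
    nabla Y X = ((l ^ 2 + m ^ 2 - n ^ 2) / (l * m * n)) • Z ∧
    nabla Y Y = 0 ∧
    nabla Y Z = ((l ^ 2 + m ^ 2 - n ^ 2) / (l * m * n)) • X ∧
    nabla Z X = ((-l ^ 2 + m ^ 2 - n ^ 2) / (l * m * n)) • Y ∧
    nabla Z Y = ((-l ^ 2 + m ^ 2 - n ^ 2) / (l * m * n)) • X ∧
    nabla Z Z = 0 := by
  have antisym : ∀ v w, bracket w v = -bracket v w := by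
    intro v w
    have h := halt (v + w)
    simp [map_add, halt v, halt w] at h
    exact eq_neg_of_add_eq_zero_left h
  have hYX : bracket Y X = -((2 * n / (l * m)) • Z) := by rw [antisym, hXY]
  have hXZ : bracket X Z = -((2 * m / (l * n)) • Y) := by rw [antisym Z X, hZX]
  have hZY : bracket Z Y = -((2 * l / (m * n)) • X) := by rw [antisym Y Z, hYZ]
  subst hX hY hZ
  have hl' : l ≠ 0 := ne_of_gt hl
  have hm' : m ≠ 0 := ne_of_gt hm
  have hn' : n ≠ 0 := ne_of_gt hn
  have k1 : 2 * ((l ^ 2 + m ^ 2 + n ^ 2) / (l * m * n)) =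
      2 * n / (l * m) + 2 * m / (l * n) + 2 * l / (m * n) := by
    field_simp; ring
  have k2 : 2 * ((l ^ 2 + m ^ 2 - n ^ 2) / (l * m * n)) =
      2 * m / (l * n) + 2 * l / (m * n) - 2 * n / (l * m) := by
    field_simp; ring
  have k3 : 2 * ((-l ^ 2 + m ^ 2 - n ^ 2) / (l * m * n)) =
      2 * m / (l * n) - 2 * l / (m * n) - 2 * n / (l * m) := by
    field_simp; ring
  refine ⟨?_, ?_, ?_, ?_, ?_, ?_, ?_, ?_, ?_⟩
  · -- nabla X X = 0
    have h0 := hKoszul ![1,0,0] ![1,0,0] ![1,0,0]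
    have h1 := hKoszul ![1,0,0] ![1,0,0] ![0,1,0]
    have h2 := hKoszul ![1,0,0] ![1,0,0] ![0,0,1]
    simp [hLor, hXY, hYX, hXZ, hZX, hYZ, hZY, halt] at h0 h1 h2
    funext i; fin_cases i <;> simp <;> linarith
  · -- nabla X Y
    have h0 := hKoszul ![1,0,0] ![0,1,0] ![1,0,0]
    have h1 := hKoszul ![1,0,0] ![0,1,0] ![0,1,0]
    have h2 := hKoszul ![1,0,0] ![0,1,0] ![0,0,1]
    simp [hLor, hXY, hYX, hXZ, hZX, hYZ, hZY, halt] at h0 h1 h2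
    funext i; fin_cases i <;> simp <;> linarith
  · -- nabla X Z
    have h0 := hKoszul ![1,0,0] ![0,0,1] ![1,0,0]
    have h1 := hKoszul ![1,0,0] ![0,0,1] ![0,1,0]
    have h2 := hKoszul ![1,0,0] ![0,0,1] ![0,0,1]
    simp [hLor, hXY, hYX, hXZ, hZX, hYZ, hZY, halt] at h0 h1 h2
    funext i; fin_cases i <;> simp <;> linarith
  · -- nabla Y X
    have h0 := hKoszul ![0,1,0] ![1,0,0] ![1,0,0]
    have h1 := hKoszul ![0,1,0] ![1,0,0] ![0,1,0]
    have h2 := hKoszul ![0,1,0] ![1,0,0] ![0,0,1]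
    simp [hLor, hXY, hYX, hXZ, hZX, hYZ, hZY, halt] at h0 h1 h2
    funext i; fin_cases i <;> simp <;> linarith
  · -- nabla Y Y = 0
    have h0 := hKoszul ![0,1,0] ![0,1,0] ![1,0,0]
    have h1 := hKoszul ![0,1,0] ![0,1,0] ![0,1,0]
    have h2 := hKoszul ![0,1,0] ![0,1,0] ![0,0,1]
    simp [hLor, hXY, hYX, hXZ, hZX, hYZ, hZY, halt] at h0 h1 h2
    funext i; fin_cases i <;> simp <;> linarith
  · -- nabla Y Z
    have h0 := hKoszul ![0,1,0] ![0,0,1] ![1,0,0]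
    have h1 := hKoszul ![0,1,0] ![0,0,1] ![0,1,0]
    have h2 := hKoszul ![0,1,0] ![0,0,1] ![0,0,1]
    simp [hLor, hXY, hYX, hXZ, hZX, hYZ, hZY, halt] at h0 h1 h2
    funext i; fin_cases i <;> simp <;> linarith
  · -- nabla Z X
    have h0 := hKoszul ![0,0,1] ![1,0,0] ![1,0,0]
    have h1 := hKoszul ![0,0,1] ![1,0,0] ![0,1,0]
    have h2 := hKoszul ![0,0,1] ![1,0,0] ![0,0,1]
    simp [hLor, hXY, hYX, hXZ, hZX, hYZ, hZY, halt] at h0 h1 h2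
    funext i; fin_cases i <;> simp <;> linarith
  · -- nabla Z Y
    have h0 := hKoszul ![0,0,1] ![0,1,0] ![1,0,0]
    have h1 := hKoszul ![0,0,1] ![0,1,0] ![0,1,0]
    have h2 := hKoszul ![0,0,1] ![0,1,0] ![0,0,1]
    simp [hLor, hXY, hYX, hXZ, hZX, hYZ, hZY, halt] at h0 h1 h2
    funext i; fin_cases i <;> simp <;> linarith
  · -- nabla Z Z = 0
    have h0 := hKoszul ![0,0,1] ![0,0,1] ![1,0,0]
    have h1 := hKoszul ![0,0,1] ![0,0,1] ![0,1,0]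
    have h2 := hKoszul ![0,0,1] ![0,0,1] ![0,0,1]
    simp [hLor, hXY, hYX, hXZ, hZX, hYZ, hZY, halt] at h0 h1 h2
    funext i; fin_cases i <;> simp <;> linarith
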